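/- arXiv:2108.00420 — 4 statements merged into one kernel-verified Lean document; each statement's English description precedes it below -/
import Mathlib

section
/- If an interior vertex v of a grove has degree 1, with its unique incident edge e, then replacing e by any of the other five edges incident to v (rotating the edge around v to an adjacent position within one of the six unit triangles containing v) yields a graph that is again a grove of the same size. -/
open SimpleGraph

/-- Vertices of the triangular lattice. -/
abbrev V2 : Type := ℤ × ℤ

/-- Adjacency in the triangular lattice: the six unit directions. -/
def latticeAdj (p q : V2) : Prop :=
  (q.1 - p.1, q.2 - p.2) ∈
    ({(2, 0), (-2, 0), (1, 1), (-1, -1), (1, -1), (-1, 1)} : Set V2)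

/-- Vertex set of a simplified grove of size `n`: the triangular region with
corners `(-n, 0)`, `(n, 0)`, `(0, -n)`, with the parity condition `i + j ≡ n (mod 2)`. -/
def groveVerts (n : ℕ) : Set V2 :=
  {p | p.2 ≤ 0 ∧ -(n : ℤ) ≤ p.1 + p.2 ∧ p.1 - p.2 ≤ (n : ℤ) ∧
    (p.1 + p.2) % 2 = (n : ℤ) % 2}

/-- The prescribed boundary vertex sets of a simplified grove of size `n`:
the three corner singletons, the west pairs `{(-i,0), ((-n-i)/2, (-n+i)/2)}`
(parametrized by `i = n - 2a`), the east pairs `{(i,0), ((n+i)/2, (i-n)/2)}`,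
the south pairs `{(-n+i, -i), (n-i, -i)}` for `n/2 < i < n`, and the middle
triplet `{(0,0), (-n/2, -n/2), (n/2, -n/2)}` when `n` is even. -/
def boundarySets (n : ℕ) : Set (Set V2) :=
  {({(-(n : ℤ), 0)} : Set V2), {((n : ℤ), 0)}, {(0, -(n : ℤ))}} ∪
  {S | ∃ a : ℤ, 0 < a ∧ 2 * a < (n : ℤ) ∧
      S = ({(2 * a - (n : ℤ), 0), (a - (n : ℤ), -a)} : Set V2)} ∪
  {S | ∃ a : ℤ, 0 < a ∧ 2 * a < (n : ℤ) ∧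
      S = ({((n : ℤ) - 2 * a, 0), ((n : ℤ) - a, -a)} : Set V2)} ∪
  {S | ∃ i : ℤ, (n : ℤ) < 2 * i ∧ i < (n : ℤ) ∧
      S = ({(-(n : ℤ) + i, -i), ((n : ℤ) - i, -i)} : Set V2)} ∪
  {S | ∃ a : ℤ, 0 < a ∧ 2 * a = (n : ℤ) ∧
      S = ({(0, 0), (-a, -a), (a, -a)} : Set V2)}

/-- `G` is a simplified grove of size `n`: an acyclic graph with edges along the
triangular lattice inside the region, such that every boundary set lies in a single
connected component, every vertex of the region is connected to some boundary set,
and distinct boundary sets lie in distinct components (so each component contains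
exactly one boundary set). -/
structure IsGrove (n : ℕ) (G : SimpleGraph V2) : Prop where
  supported : ∀ ⦃p q : V2⦄, G.Adj p q →
    p ∈ groveVerts n ∧ q ∈ groveVerts n ∧ latticeAdj p q
  acyclic : G.IsAcyclic
  conn_in : ∀ S ∈ boundarySets n, ∀ u ∈ S, ∀ v ∈ S, G.Reachable u v
  conn_ex : ∀ v ∈ groveVerts n, ∃ S ∈ boundarySets n, ∃ u ∈ S, G.Reachable v u
  conn_sep : ∀ S ∈ boundarySets n, ∀ S' ∈ boundarySets n, S ≠ S' →
    ∀ u ∈ S, ∀ v ∈ S', ¬ G.Reachable u v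

/-- The three edges of the downward unit triangle with bottom apex `p`
(its other two vertices are `(p.1 - 1, p.2 + 1)` and `(p.1 + 1, p.2 + 1)`). -/
def downTriEdges (p : V2) : Set (Sym2 V2) :=
  {s(p, (p.1 - 1, p.2 + 1)), s(p, (p.1 + 1, p.2 + 1)),
   s((p.1 - 1, p.2 + 1), (p.1 + 1, p.2 + 1))}

/-- Apex positions of the downward unit triangles contained in the size-`n` region. -/
def downPos (n : ℕ) : Set V2 :=
  {p | p.2 < 0 ∧ -(n : ℤ) ≤ p.1 + p.2 ∧ p.1 - p.2 ≤ (n : ℤ) ∧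
    (p.1 + p.2) % 2 = (n : ℤ) % 2}

/-- The alternating-sign-triangle entry of `G` at the downward triangle with apex `p`:
`1 - e` where `e` is the number of edges of `G` in that triangle. -/
noncomputable def ast (G : SimpleGraph V2) (p : V2) : ℤ :=
  1 - ((G.edgeSet ∩ downTriEdges p).ncard : ℤ)

/-- Interior vertices of the size-`n` region. -/
def interiorVerts (n : ℕ) : Set V2 :=
  {p | p ∈ groveVerts n ∧ p.2 < 0 ∧ -(n : ℤ) < p.1 + p.2 ∧ p.1 - p.2 < (n : ℤ)}

/-- Clockwise rotation by 60° of a lattice direction. -/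
def cw (d : V2) : V2 := ((d.1 + 3 * d.2) / 2, (d.2 - d.1) / 2)

/-- Counterclockwise rotation by 60° of a lattice direction. -/
def ccw (d : V2) : V2 := ((d.1 - 3 * d.2) / 2, (d.1 + d.2) / 2)

/-- Replace the edge `e` of `G` by the edge `e'`. -/
def replaceEdge (G : SimpleGraph V2) (e e' : Sym2 V2) : SimpleGraph V2 :=
  SimpleGraph.fromEdgeSet ((G.edgeSet \ {e}) ∪ {e'})

/-- A spin: the unique edge `{v, w}` at an interior degree-one pivot `v` is rotated
to an adjacent position `{v, w'}` around `v` (clockwise or counterclockwise). -/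
def IsSpin (n : ℕ) (G G' : SimpleGraph V2) : Prop :=
  ∃ v w w' : V2, v ∈ interiorVerts n ∧ (∀ u, G.Adj v u ↔ u = w) ∧
    (w' - v = cw (w - v) ∨ w' - v = ccw (w - v)) ∧
    G' = replaceEdge G s(v, w) s(v, w')

/-- If an interior vertex `v` of a grove has degree 1, with unique incident edge
`{v, w}`, then replacing it by any of the other five lattice edges incident to `v`
yields again a grove of the same size. -/
theorem spin_any_edge_isGrove (n : ℕ) (G : SimpleGraph V2) (hG : IsGrove n G)
    (v w w' : V2) (hv : v ∈ interiorVerts n) (hdeg : ∀ u, G.Adj v u ↔ u = w)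
    (hw' : latticeAdj v w') (hne : w' ≠ w) :
    IsGrove n (replaceEdge G s(v, w) s(v, w')) := by
  classical
  -- Basic facts
  obtain ⟨hvG, hv2, hvl, hvr⟩ := hv
  obtain ⟨hvj, hvL, hvR, hvpar⟩ := hvG
  have hvw : G.Adj v w := (hdeg w).mpr rfl
  have hvwne : v ≠ w := hvw.ne
  have hlat6 : ∀ p q : V2, latticeAdj p q ↔
      ((q.1 - p.1 = 2 ∧ q.2 - p.2 = 0) ∨ (q.1 - p.1 = -2 ∧ q.2 - p.2 = 0) ∨
       (q.1 - p.1 = 1 ∧ q.2 - p.2 = 1) ∨ (q.1 - p.1 = -1 ∧ q.2 - p.2 = -1) ∨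
       (q.1 - p.1 = 1 ∧ q.2 - p.2 = -1) ∨ (q.1 - p.1 = -1 ∧ q.2 - p.2 = 1)) := by
    intro p q
    simp [latticeAdj, Set.mem_insert_iff, Prod.ext_iff]
  have hlat_symm : ∀ p q : V2, latticeAdj p q → latticeAdj q p := by
    intro p q h
    rw [hlat6] at h ⊢
    omega
  have hvw'ne : v ≠ w' := by
    intro h
    rw [hlat6] at hw'
    rw [h] at hw'
    omega
  have hw'grove : w' ∈ groveVerts n := by
    rw [hlat6] at hw'
    refine ⟨?_, ?_, ?_, ?_⟩ <;> omega
  -- The new graph G'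
  set G' := replaceEdge G s(v, w) s(v, w') with hG'def
  have hG'adj : ∀ p q : V2, G'.Adj p q ↔
      (G.Adj p q ∧ s(p, q) ≠ s(v, w)) ∨ s(p, q) = s(v, w') := by
    intro p q
    rw [hG'def, replaceEdge, fromEdgeSet_adj]
    constructor
    · rintro ⟨h, -⟩
      rcases h with h | h
      · exact Or.inl ⟨h.1, h.2⟩
      · exact Or.inr h
    · rintro (⟨h1, h2⟩ | h)
      · exact ⟨Or.inl ⟨h1, h2⟩, h1.ne⟩
      · refine ⟨Or.inr h, ?_⟩
        rw [Sym2.eq_iff] at h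
        rcases h with ⟨rfl, rfl⟩ | ⟨rfl, rfl⟩
        · exact hvw'ne
        · exact fun hh => hvw'ne hh.symm
  have hG'vw' : G'.Adj v w' := by
    rw [hG'adj]
    exact Or.inr rfl
  -- unique neighbour of v in G'
  have hdeg' : ∀ u, G'.Adj v u → u = w' := by
    intro u hu
    rw [hG'adj] at hu
    rcases hu with ⟨h1, h2⟩ | h
    · exact absurd (by rw [(hdeg u).mp h1]) h2
    · rw [Sym2.eq_iff] at h
      rcases h with ⟨-, h⟩ | ⟨h, -⟩
      · exact h
      · exact absurd h hvw'ne
  have hdegG : ∀ u, G.Adj v u → u = w := fun u h => (hdeg u).mp h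
  -- key lemma: a trail with endpoints ≠ v avoids v, given v has a unique neighbour
  have key : ∀ (K : SimpleGraph V2) (z : V2), (∀ u, K.Adj v u → u = z) →
      ∀ (a b : V2) (p : K.Walk a b), p.IsTrail → a ≠ v → b ≠ v → v ∉ p.support := by
    intro K z hz a b p ht ha hb hmem
    have hq1 : s(v, z) ∈ (p.takeUntil v hmem).edges := by
      have hnn : ¬ (p.takeUntil v hmem).reverse.Nil :=
        Walk.not_nil_of_ne (fun h => ha h.symm)
      obtain ⟨u, hadj, q, hq⟩ := Walk.not_nil_iff.mp hnn
      have hu : u = z := hz u hadj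
      have : s(v, u) ∈ (p.takeUntil v hmem).reverse.edges := by
        rw [hq]; simp
      rwa [Walk.edges_reverse, List.mem_reverse, hu] at this
    have hq2 : s(v, z) ∈ (p.dropUntil v hmem).edges := by
      have hnn : ¬ (p.dropUntil v hmem).Nil :=
        Walk.not_nil_of_ne (fun h => hb h.symm)
      obtain ⟨u, hadj, q, hq⟩ := Walk.not_nil_iff.mp hnn
      have hu : u = z := hz u hadj
      have : s(v, u) ∈ (p.dropUntil v hmem).edges := by
        rw [hq]; simp
      rwa [hu] at this
    have hspec := p.take_spec hmem
    have hnd : p.edges.Nodup := ht.edges_nodup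
    rw [← hspec, Walk.edges_append] at hnd
    exact List.disjoint_of_nodup_append hnd hq1 hq2
  -- edges of a suitable trail avoid v
  have keyE : ∀ (K : SimpleGraph V2) (z : V2), (∀ u, K.Adj v u → u = z) →
      ∀ (a b : V2) (p : K.Walk a b), p.IsTrail → a ≠ v → b ≠ v →
      ∀ e ∈ p.edges, v ∉ e := by
    intro K z hz a b p ht ha hb e he hve
    have hsup := key K z hz a b p ht ha hb
    induction e with
    | h c d =>
      rw [Sym2.mem_iff] at hve
      rcases hve with rfl | rfl
      · exact hsup (p.fst_mem_support_of_mem_edges he)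
      · exact hsup (p.snd_mem_support_of_mem_edges he)
  -- reachability transfer, both directions
  have Rfwd : ∀ a b : V2, a ≠ v → b ≠ v → G.Reachable a b → G'.Reachable a b := by
    intro a b ha hb hr
    obtain ⟨p0⟩ := hr
    let p := p0.toPath
    have hE : ∀ e ∈ (p : G.Walk a b).edges, e ∈ G'.edgeSet := by
      intro e he
      have hve : v ∉ e := keyE G w hdegG a b p p.2.isTrail ha hb e he
      have heG : e ∈ G.edgeSet := (p : G.Walk a b).edges_subset_edgeSet he
      induction e with
      | h c d =>
        rw [mem_edgeSet] at heG ⊢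
        rw [hG'adj]
        refine Or.inl ⟨heG, ?_⟩
        intro hcontra
        exact hve (hcontra ▸ Sym2.mem_mk_left v w)
    exact ⟨(p : G.Walk a b).transfer G' hE⟩
  have Rbwd : ∀ a b : V2, a ≠ v → b ≠ v → G'.Reachable a b → G.Reachable a b := by
    intro a b ha hb hr
    obtain ⟨p0⟩ := hr
    let p := p0.toPath
    have hE : ∀ e ∈ (p : G'.Walk a b).edges, e ∈ G.edgeSet := by
      intro e he
      have hve : v ∉ e := keyE G' w' hdeg' a b p p.2.isTrail ha hb e he
      have heG : e ∈ G'.edgeSet := (p : G'.Walk a b).edges_subset_edgeSet he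
      induction e with
      | h c d =>
        rw [mem_edgeSet] at heG ⊢
        rw [hG'adj] at heG
        rcases heG with ⟨h1, -⟩ | h1
        · exact h1
        · exact absurd (h1 ▸ Sym2.mem_mk_left v w') hve
    exact ⟨(p : G'.Walk a b).transfer G hE⟩
  -- boundary vertices are not v
  have hbnd : ∀ S ∈ boundarySets n, ∀ u ∈ S, u ≠ v := by
    intro S hS u hu hcontra
    subst hcontra
    simp only [boundarySets, Set.mem_union, Set.mem_insert_iff, Set.mem_singleton_iff,
      Set.mem_setOf_eq] at hS
    rcases hS with ((((hS | hS | hS) | hS) | hS) | hS) | hS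
    · subst hS
      simp only [Set.mem_singleton_iff, Prod.ext_iff] at hu
      omega
    · subst hS
      simp only [Set.mem_singleton_iff, Prod.ext_iff] at hu
      omega
    · subst hS
      simp only [Set.mem_singleton_iff, Prod.ext_iff] at hu
      omega
    · obtain ⟨a, ha1, ha2, rfl⟩ := hS
      simp only [Set.mem_insert_iff, Set.mem_singleton_iff, Prod.ext_iff] at hu
      omega
    · obtain ⟨a, ha1, ha2, rfl⟩ := hS
      simp only [Set.mem_insert_iff, Set.mem_singleton_iff, Prod.ext_iff] at hu
      omega
    · obtain ⟨i, hi1, hi2, rfl⟩ := hS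
      simp only [Set.mem_insert_iff, Set.mem_singleton_iff, Prod.ext_iff] at hu
      omega
    · obtain ⟨a, ha1, ha2, rfl⟩ := hS
      simp only [Set.mem_insert_iff, Set.mem_singleton_iff, Prod.ext_iff] at hu
      omega
  constructor
  -- supported
  · intro p q hadj
    rw [hG'adj] at hadj
    rcases hadj with ⟨h1, -⟩ | h1
    · exact hG.supported h1
    · rw [Sym2.eq_iff] at h1
      rcases h1 with ⟨rfl, rfl⟩ | ⟨rfl, rfl⟩
      · exact ⟨⟨hvj, hvL, hvR, hvpar⟩, hw'grove, hw'⟩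
      · exact ⟨hw'grove, ⟨hvj, hvL, hvR, hvpar⟩, hlat_symm _ _ hw'⟩
  -- acyclic
  · intro a c hc
    by_cases hmem : v ∈ c.support
    · have hd : (c.rotate v hmem).IsCycle := hc.rotate hmem
      set d := c.rotate v hmem with hddef
      clear_value d
      cases d with
      | nil => exact hd.not_nil Walk.Nil.nil
      | cons h q =>
        rename_i x
        have hx : x = w' := hdeg' x h
        rw [Walk.cons_isCycle_iff] at hd
        have hnn : ¬ q.reverse.Nil :=
          Walk.not_nil_of_ne (fun hh => hvw'ne (hh.trans hx))
        obtain ⟨u, hadj, r, hr⟩ := Walk.not_nil_iff.mp hnn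
        have hu : u = x := (hdeg' u hadj).trans hx.symm
        have hmem2 : s(v, u) ∈ q.reverse.edges := by rw [hr]; simp
        rw [Walk.edges_reverse, List.mem_reverse, hu] at hmem2
        exact hd.2 hmem2
    · have hE : ∀ e ∈ c.edges, e ∈ G.edgeSet := by
        intro e he
        have hve : v ∉ e := by
          intro hcontra
          induction e with
          | h c' d' =>
            rw [Sym2.mem_iff] at hcontra
            rcases hcontra with rfl | rfl
            · exact hmem (c.fst_mem_support_of_mem_edges he)
            · exact hmem (c.snd_mem_support_of_mem_edges he)
        have heG : e ∈ G'.edgeSet := c.edges_subset_edgeSet he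
        induction e with
        | h c' d' =>
          rw [mem_edgeSet] at heG ⊢
          rw [hG'adj] at heG
          rcases heG with ⟨h1, -⟩ | h1
          · exact h1
          · exact absurd (h1 ▸ Sym2.mem_mk_left v w') hve
      exact hG.acyclic (c.transfer G hE) (hc.transfer hE)
  -- conn_in
  · intro S hS u hu x hx
    exact Rfwd u x (hbnd S hS u hu) (hbnd S hS x hx) (hG.conn_in S hS u hu x hx)
  -- conn_ex
  · intro p hp
    by_cases hpv : p = v
    · subst hpv
      obtain ⟨S, hS, u, hu, hru⟩ := hG.conn_ex w' hw'grove
      exact ⟨S, hS, u, hu,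
        (hG'vw'.reachable).trans (Rfwd w' u (Ne.symm hvw'ne) (hbnd S hS u hu) hru)⟩
    · obtain ⟨S, hS, u, hu, hru⟩ := hG.conn_ex p hp
      exact ⟨S, hS, u, hu, Rfwd p u hpv (hbnd S hS u hu) hru⟩
  -- conn_sep
  · intro S hS S' hS' hne' u hu x hx hr
    exact hG.conn_sep S hS S' hS' hne' u hu x hx
      (Rbwd u x (hbnd S hS u hu) (hbnd S' hS' x hx) hr)
end

section
/- A spin of type 2, 4, or 6 (rotating a pendant edge at a pivot vertex across a downward triangle) changes the associated alternating sign triangle by adding or subtracting exactly one of the three sub-triangle patterns: (top row -1, 1; bottom 0), (top row 1, 0; bottom -1), or (top row 0, -1; bottom 1). -/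
open SimpleGraph

/-- Sub-triangle pattern `(-1, 1; 0)`: entries at the two horizontally adjacent
downward triangles with apexes `q` and `(q.1 + 2, q.2)` and at the downward triangle
between and below them, with apex `(q.1 + 1, q.2 - 1)`. -/
def pat1 (q : V2) : V2 → ℤ := fun p =>
  if p = q then -1 else if p = (q.1 + 2, q.2) then 1 else 0

/-- Sub-triangle pattern `(1, 0; -1)`. -/
def pat2 (q : V2) : V2 → ℤ := fun p =>
  if p = q then 1 else if p = (q.1 + 1, q.2 - 1) then -1 else 0

/-- Sub-triangle pattern `(0, -1; 1)`. -/
def pat3 (q : V2) : V2 → ℤ := fun p =>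
  if p = (q.1 + 2, q.2) then -1 else if p = (q.1 + 1, q.2 - 1) then 1 else 0

section AuxSpin

lemma dt1 (a b p1 p2 : ℤ) : s(((a,b):V2),((a+2,b):V2)) ∈ downTriEdges ((p1,p2):V2) ↔
    p1 = a+1 ∧ p2 = b-1 := by
  simp only [downTriEdges, Set.mem_insert_iff, Set.mem_singleton_iff, Sym2.eq_iff, Prod.mk.injEq]
  omega

lemma dt2 (a b p1 p2 : ℤ) : s(((a,b):V2),((a-2,b):V2)) ∈ downTriEdges ((p1,p2):V2) ↔
    p1 = a-1 ∧ p2 = b-1 := by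
  simp only [downTriEdges, Set.mem_insert_iff, Set.mem_singleton_iff, Sym2.eq_iff, Prod.mk.injEq]
  omega

lemma dt3 (a b p1 p2 : ℤ) : s(((a,b):V2),((a+1,b+1):V2)) ∈ downTriEdges ((p1,p2):V2) ↔
    p1 = a ∧ p2 = b := by
  simp only [downTriEdges, Set.mem_insert_iff, Set.mem_singleton_iff, Sym2.eq_iff, Prod.mk.injEq]
  omega

lemma dt4 (a b p1 p2 : ℤ) : s(((a,b):V2),((a-1,b+1):V2)) ∈ downTriEdges ((p1,p2):V2) ↔
    p1 = a ∧ p2 = b := by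
  simp only [downTriEdges, Set.mem_insert_iff, Set.mem_singleton_iff, Sym2.eq_iff, Prod.mk.injEq]
  omega

lemma dt5 (a b p1 p2 : ℤ) : s(((a,b):V2),((a+1,b-1):V2)) ∈ downTriEdges ((p1,p2):V2) ↔
    p1 = a+1 ∧ p2 = b-1 := by
  simp only [downTriEdges, Set.mem_insert_iff, Set.mem_singleton_iff, Sym2.eq_iff, Prod.mk.injEq]
  omega

lemma dt6 (a b p1 p2 : ℤ) : s(((a,b):V2),((a-1,b-1):V2)) ∈ downTriEdges ((p1,p2):V2) ↔
    p1 = a-1 ∧ p2 = b-1 := by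
  simp only [downTriEdges, Set.mem_insert_iff, Set.mem_singleton_iff, Sym2.eq_iff, Prod.mk.injEq]
  omega

lemma edgeSet_replace (G : SimpleGraph V2) (e e' : Sym2 V2) (hd : ¬ e'.IsDiag) :
    (replaceEdge G e e').edgeSet = (G.edgeSet \ {e}) ∪ {e'} := by
  rw [replaceEdge, edgeSet_fromEdgeSet]
  ext x
  simp only [Set.mem_diff, Set.mem_union, Set.mem_singleton_iff, Set.mem_setOf_eq]
  constructor
  · rintro ⟨h, _⟩; exact h
  · rintro (⟨hx, hne⟩ | rfl)
    · exact ⟨Or.inl ⟨hx, hne⟩, G.not_isDiag_of_mem_edgeSet hx⟩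
    · exact ⟨Or.inr rfl, hd⟩

open scoped Classical in
lemma ast_replace (G : SimpleGraph V2) (e e' : Sym2 V2) (he : e ∈ G.edgeSet)
    (he' : e' ∉ G.edgeSet) (hd : ¬ e'.IsDiag) (hne : e ≠ e') (p : V2) :
    ast (replaceEdge G e e') p = ast G p
      + (if e ∈ downTriEdges p then 1 else 0)
      - (if e' ∈ downTriEdges p then 1 else 0) := by
  have hT : (downTriEdges p).Finite := by
    unfold downTriEdges
    exact ((Set.finite_singleton _).insert _).insert _
  rw [ast, ast, edgeSet_replace G e e' hd]
  set B := G.edgeSet ∩ downTriEdges p with hBdef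
  have hB : B.Finite := hT.subset Set.inter_subset_right
  by_cases h1 : e ∈ downTriEdges p <;> by_cases h2 : e' ∈ downTriEdges p <;>
    simp only [h1, h2, if_true, if_false]
  · have hs : ((G.edgeSet \ {e}) ∪ {e'}) ∩ downTriEdges p = insert e' (B \ {e}) := by
      ext x
      simp only [Set.mem_inter_iff, Set.mem_union, Set.mem_diff, Set.mem_singleton_iff,
        Set.mem_insert_iff, hBdef]
      constructor
      · rintro ⟨h | rfl, hx⟩
        · exact Or.inr ⟨⟨h.1, hx⟩, h.2⟩
        · exact Or.inl rfl
      · rintro (rfl | ⟨⟨ha, hx⟩, hne⟩)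
        · exact ⟨Or.inr rfl, h2⟩
        · exact ⟨Or.inl ⟨ha, hne⟩, hx⟩
    have hmem : e ∈ B := ⟨he, h1⟩
    have hnm : e' ∉ B \ {e} := fun h => he' h.1.1
    rw [hs, Set.ncard_insert_of_notMem hnm hB.diff,
      Set.ncard_diff_singleton_of_mem hmem]
    have hpos : 0 < B.ncard := (Set.ncard_pos hB).2 ⟨e, hmem⟩
    omega
  · have hs : ((G.edgeSet \ {e}) ∪ {e'}) ∩ downTriEdges p = B \ {e} := by
      ext x
      simp only [Set.mem_inter_iff, Set.mem_union, Set.mem_diff, Set.mem_singleton_iff, hBdef]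
      constructor
      · rintro ⟨h | rfl, hx⟩
        · exact ⟨⟨h.1, hx⟩, h.2⟩
        · exact absurd hx h2
      · rintro ⟨⟨ha, hx⟩, hne⟩
        exact ⟨Or.inl ⟨ha, hne⟩, hx⟩
    have hmem : e ∈ B := ⟨he, h1⟩
    rw [hs, Set.ncard_diff_singleton_of_mem hmem]
    have hpos : 0 < B.ncard := (Set.ncard_pos hB).2 ⟨e, hmem⟩
    omega
  · have hs : ((G.edgeSet \ {e}) ∪ {e'}) ∩ downTriEdges p = insert e' B := by
      ext x
      simp only [Set.mem_inter_iff, Set.mem_union, Set.mem_diff, Set.mem_singleton_iff,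
        Set.mem_insert_iff, hBdef]
      constructor
      · rintro ⟨h | rfl, hx⟩
        · exact Or.inr ⟨h.1, hx⟩
        · exact Or.inl rfl
      · rintro (rfl | ⟨ha, hx⟩)
        · exact ⟨Or.inr rfl, h2⟩
        · exact ⟨Or.inl ⟨ha, fun hq => h1 (hq ▸ hx)⟩, hx⟩
    have hnm : e' ∉ B := fun h => he' h.1
    rw [hs, Set.ncard_insert_of_notMem hnm hB]
    omega
  · have hs : ((G.edgeSet \ {e}) ∪ {e'}) ∩ downTriEdges p = B := by
      ext x
      simp only [Set.mem_inter_iff, Set.mem_union, Set.mem_diff, Set.mem_singleton_iff, hBdef]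
      constructor
      · rintro ⟨h | rfl, hx⟩
        · exact ⟨h.1, hx⟩
        · exact absurd hx h2
      · rintro ⟨ha, hx⟩
        exact ⟨Or.inl ⟨ha, fun hq => h1 (hq ▸ hx)⟩, hx⟩
    rw [hs]
    omega

end AuxSpin

/-- A spin that changes which downward triangles contain the pivot's edge (a spin of
type 2, 4, or 6) changes the alternating sign triangle by adding or subtracting
exactly one of the three sub-triangle patterns. -/
theorem spin_type246_pattern (n : ℕ) (G G' : SimpleGraph V2) (hG : IsGrove n G)
    (v w w' : V2) (hv : v ∈ interiorVerts n) (hdeg : ∀ u, G.Adj v u ↔ u = w)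
    (hrot : w' - v = cw (w - v) ∨ w' - v = ccw (w - v))
    (hG' : G' = replaceEdge G s(v, w) s(v, w'))
    (htype : {p : V2 | s(v, w) ∈ downTriEdges p} ≠ {p : V2 | s(v, w') ∈ downTriEdges p}) :
    ∃ q : V2, ∃ ε : ℤ, (ε = 1 ∨ ε = -1) ∧
      ((∀ p, ast G' p = ast G p + ε * pat1 q p) ∨
       (∀ p, ast G' p = ast G p + ε * pat2 q p) ∨
       (∀ p, ast G' p = ast G p + ε * pat3 q p)) := by
  subst hG'
  have hadj : G.Adj v w := (hdeg w).mpr rfl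
  have hlat := (hG.supported hadj).2.2
  obtain ⟨v1, v2⟩ := v
  simp only [latticeAdj, Set.mem_insert_iff, Set.mem_singleton_iff, Prod.mk.injEq] at hlat
  rcases hlat with ⟨h1, h2⟩ | ⟨h1, h2⟩ | ⟨h1, h2⟩ | ⟨h1, h2⟩ | ⟨h1, h2⟩ | ⟨h1, h2⟩
  · have hw : w = ((v1 + 2, v2) : V2) :=
      Prod.ext_iff.mpr ⟨by show w.1 = v1 + 2; omega, by show w.2 = v2; omega⟩
    subst hw
    simp only [cw, ccw, Prod.mk_sub_mk, Prod.ext_iff, Prod.fst_sub, Prod.snd_sub] at hrot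
    rcases hrot with ⟨ha, hb⟩ | ⟨ha, hb⟩
    · have hw' : w' = ((v1 + 1, v2 - 1) : V2) :=
        Prod.ext_iff.mpr ⟨by show w'.1 = v1 + 1; omega, by show w'.2 = v2 - 1; omega⟩
      subst hw'
      refine absurd ?_ htype
      ext ⟨p1, p2⟩
      simp only [Set.mem_setOf_eq, dt1, dt5]
    · have hw' : w' = ((v1 + 1, v2 + 1) : V2) :=
        Prod.ext_iff.mpr ⟨by show w'.1 = v1 + 1; omega, by show w'.2 = v2 + 1; omega⟩
      subst hw'
      have he : s((((v1, v2)) : V2), ((v1 + 2, v2) : V2)) ∈ G.edgeSet :=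
        (SimpleGraph.mem_edgeSet G).mpr hadj
      have he' : s((((v1, v2)) : V2), ((v1 + 1, v2 + 1) : V2)) ∉ G.edgeSet := by
        intro h
        have h9 := (hdeg _).mp ((SimpleGraph.mem_edgeSet G).mp h)
        simp only [Prod.mk.injEq] at h9
        omega
      have hd : ¬ (s((((v1, v2)) : V2), ((v1 + 1, v2 + 1) : V2))).IsDiag := by
        simp only [Sym2.mk_isDiag_iff, Prod.mk.injEq]
        omega
      have hne : s((((v1, v2)) : V2), ((v1 + 2, v2) : V2)) ≠
          s((((v1, v2)) : V2), ((v1 + 1, v2 + 1) : V2)) := by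
        simp only [ne_eq, Sym2.eq_iff, Prod.mk.injEq]
        omega
      refine ⟨((v1, v2) : V2), -1, Or.inr rfl, Or.inr (Or.inl ?_)⟩
      rintro ⟨p1, p2⟩
      rw [ast_replace G _ _ he he' hd hne, dt1, dt3]
      simp only [pat2, Prod.mk.injEq]
      split_ifs <;> omega
  · have hw : w = ((v1 - 2, v2) : V2) :=
      Prod.ext_iff.mpr ⟨by show w.1 = v1 - 2; omega, by show w.2 = v2; omega⟩
    subst hw
    simp only [cw, ccw, Prod.mk_sub_mk, Prod.ext_iff, Prod.fst_sub, Prod.snd_sub] at hrot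
    rcases hrot with ⟨ha, hb⟩ | ⟨ha, hb⟩
    · have hw' : w' = ((v1 - 1, v2 + 1) : V2) :=
        Prod.ext_iff.mpr ⟨by show w'.1 = v1 - 1; omega, by show w'.2 = v2 + 1; omega⟩
      subst hw'
      have he : s((((v1, v2)) : V2), ((v1 - 2, v2) : V2)) ∈ G.edgeSet :=
        (SimpleGraph.mem_edgeSet G).mpr hadj
      have he' : s((((v1, v2)) : V2), ((v1 - 1, v2 + 1) : V2)) ∉ G.edgeSet := by
        intro h
        have h9 := (hdeg _).mp ((SimpleGraph.mem_edgeSet G).mp h)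
        simp only [Prod.mk.injEq] at h9
        omega
      have hd : ¬ (s((((v1, v2)) : V2), ((v1 - 1, v2 + 1) : V2))).IsDiag := by
        simp only [Sym2.mk_isDiag_iff, Prod.mk.injEq]
        omega
      have hne : s((((v1, v2)) : V2), ((v1 - 2, v2) : V2)) ≠
          s((((v1, v2)) : V2), ((v1 - 1, v2 + 1) : V2)) := by
        simp only [ne_eq, Sym2.eq_iff, Prod.mk.injEq]
        omega
      refine ⟨((v1 - 2, v2) : V2), 1, Or.inl rfl, Or.inr (Or.inr ?_)⟩
      rintro ⟨p1, p2⟩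
      rw [ast_replace G _ _ he he' hd hne, dt2, dt4]
      simp only [pat3, Prod.mk.injEq]
      split_ifs <;> omega
    · have hw' : w' = ((v1 - 1, v2 - 1) : V2) :=
        Prod.ext_iff.mpr ⟨by show w'.1 = v1 - 1; omega, by show w'.2 = v2 - 1; omega⟩
      subst hw'
      refine absurd ?_ htype
      ext ⟨p1, p2⟩
      simp only [Set.mem_setOf_eq, dt2, dt6]
  · have hw : w = ((v1 + 1, v2 + 1) : V2) :=
      Prod.ext_iff.mpr ⟨by show w.1 = v1 + 1; omega, by show w.2 = v2 + 1; omega⟩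
    subst hw
    simp only [cw, ccw, Prod.mk_sub_mk, Prod.ext_iff, Prod.fst_sub, Prod.snd_sub] at hrot
    rcases hrot with ⟨ha, hb⟩ | ⟨ha, hb⟩
    · have hw' : w' = ((v1 + 2, v2) : V2) :=
        Prod.ext_iff.mpr ⟨by show w'.1 = v1 + 2; omega, by show w'.2 = v2; omega⟩
      subst hw'
      have he : s((((v1, v2)) : V2), ((v1 + 1, v2 + 1) : V2)) ∈ G.edgeSet :=
        (SimpleGraph.mem_edgeSet G).mpr hadj
      have he' : s((((v1, v2)) : V2), ((v1 + 2, v2) : V2)) ∉ G.edgeSet := by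
        intro h
        have h9 := (hdeg _).mp ((SimpleGraph.mem_edgeSet G).mp h)
        simp only [Prod.mk.injEq] at h9
        omega
      have hd : ¬ (s((((v1, v2)) : V2), ((v1 + 2, v2) : V2))).IsDiag := by
        simp only [Sym2.mk_isDiag_iff, Prod.mk.injEq]
        omega
      have hne : s((((v1, v2)) : V2), ((v1 + 1, v2 + 1) : V2)) ≠
          s((((v1, v2)) : V2), ((v1 + 2, v2) : V2)) := by
        simp only [ne_eq, Sym2.eq_iff, Prod.mk.injEq]
        omega
      refine ⟨((v1, v2) : V2), 1, Or.inl rfl, Or.inr (Or.inl ?_)⟩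
      rintro ⟨p1, p2⟩
      rw [ast_replace G _ _ he he' hd hne, dt3, dt1]
      simp only [pat2, Prod.mk.injEq]
      split_ifs <;> omega
    · have hw' : w' = ((v1 - 1, v2 + 1) : V2) :=
        Prod.ext_iff.mpr ⟨by show w'.1 = v1 - 1; omega, by show w'.2 = v2 + 1; omega⟩
      subst hw'
      refine absurd ?_ htype
      ext ⟨p1, p2⟩
      simp only [Set.mem_setOf_eq, dt3, dt4]
  · have hw : w = ((v1 - 1, v2 - 1) : V2) :=
      Prod.ext_iff.mpr ⟨by show w.1 = v1 - 1; omega, by show w.2 = v2 - 1; omega⟩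
    subst hw
    simp only [cw, ccw, Prod.mk_sub_mk, Prod.ext_iff, Prod.fst_sub, Prod.snd_sub] at hrot
    rcases hrot with ⟨ha, hb⟩ | ⟨ha, hb⟩
    · have hw' : w' = ((v1 - 2, v2) : V2) :=
        Prod.ext_iff.mpr ⟨by show w'.1 = v1 - 2; omega, by show w'.2 = v2; omega⟩
      subst hw'
      refine absurd ?_ htype
      ext ⟨p1, p2⟩
      simp only [Set.mem_setOf_eq, dt6, dt2]
    · have hw' : w' = ((v1 + 1, v2 - 1) : V2) :=
        Prod.ext_iff.mpr ⟨by show w'.1 = v1 + 1; omega, by show w'.2 = v2 - 1; omega⟩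
      subst hw'
      have he : s((((v1, v2)) : V2), ((v1 - 1, v2 - 1) : V2)) ∈ G.edgeSet :=
        (SimpleGraph.mem_edgeSet G).mpr hadj
      have he' : s((((v1, v2)) : V2), ((v1 + 1, v2 - 1) : V2)) ∉ G.edgeSet := by
        intro h
        have h9 := (hdeg _).mp ((SimpleGraph.mem_edgeSet G).mp h)
        simp only [Prod.mk.injEq] at h9
        omega
      have hd : ¬ (s((((v1, v2)) : V2), ((v1 + 1, v2 - 1) : V2))).IsDiag := by
        simp only [Sym2.mk_isDiag_iff, Prod.mk.injEq]
        omega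
      have hne : s((((v1, v2)) : V2), ((v1 - 1, v2 - 1) : V2)) ≠
          s((((v1, v2)) : V2), ((v1 + 1, v2 - 1) : V2)) := by
        simp only [ne_eq, Sym2.eq_iff, Prod.mk.injEq]
        omega
      refine ⟨((v1 - 1, v2 - 1) : V2), -1, Or.inr rfl, Or.inl ?_⟩
      rintro ⟨p1, p2⟩
      rw [ast_replace G _ _ he he' hd hne, dt6, dt5]
      simp only [pat1, Prod.mk.injEq]
      split_ifs <;> omega
  · have hw : w = ((v1 + 1, v2 - 1) : V2) :=
      Prod.ext_iff.mpr ⟨by show w.1 = v1 + 1; omega, by show w.2 = v2 - 1; omega⟩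
    subst hw
    simp only [cw, ccw, Prod.mk_sub_mk, Prod.ext_iff, Prod.fst_sub, Prod.snd_sub] at hrot
    rcases hrot with ⟨ha, hb⟩ | ⟨ha, hb⟩
    · have hw' : w' = ((v1 - 1, v2 - 1) : V2) :=
        Prod.ext_iff.mpr ⟨by show w'.1 = v1 - 1; omega, by show w'.2 = v2 - 1; omega⟩
      subst hw'
      have he : s((((v1, v2)) : V2), ((v1 + 1, v2 - 1) : V2)) ∈ G.edgeSet :=
        (SimpleGraph.mem_edgeSet G).mpr hadj
      have he' : s((((v1, v2)) : V2), ((v1 - 1, v2 - 1) : V2)) ∉ G.edgeSet := by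
        intro h
        have h9 := (hdeg _).mp ((SimpleGraph.mem_edgeSet G).mp h)
        simp only [Prod.mk.injEq] at h9
        omega
      have hd : ¬ (s((((v1, v2)) : V2), ((v1 - 1, v2 - 1) : V2))).IsDiag := by
        simp only [Sym2.mk_isDiag_iff, Prod.mk.injEq]
        omega
      have hne : s((((v1, v2)) : V2), ((v1 + 1, v2 - 1) : V2)) ≠
          s((((v1, v2)) : V2), ((v1 - 1, v2 - 1) : V2)) := by
        simp only [ne_eq, Sym2.eq_iff, Prod.mk.injEq]
        omega
      refine ⟨((v1 - 1, v2 - 1) : V2), 1, Or.inl rfl, Or.inl ?_⟩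
      rintro ⟨p1, p2⟩
      rw [ast_replace G _ _ he he' hd hne, dt5, dt6]
      simp only [pat1, Prod.mk.injEq]
      split_ifs <;> omega
    · have hw' : w' = ((v1 + 2, v2) : V2) :=
        Prod.ext_iff.mpr ⟨by show w'.1 = v1 + 2; omega, by show w'.2 = v2; omega⟩
      subst hw'
      refine absurd ?_ htype
      ext ⟨p1, p2⟩
      simp only [Set.mem_setOf_eq, dt5, dt1]
  · have hw : w = ((v1 - 1, v2 + 1) : V2) :=
      Prod.ext_iff.mpr ⟨by show w.1 = v1 - 1; omega, by show w.2 = v2 + 1; omega⟩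
    subst hw
    simp only [cw, ccw, Prod.mk_sub_mk, Prod.ext_iff, Prod.fst_sub, Prod.snd_sub] at hrot
    rcases hrot with ⟨ha, hb⟩ | ⟨ha, hb⟩
    · have hw' : w' = ((v1 + 1, v2 + 1) : V2) :=
        Prod.ext_iff.mpr ⟨by show w'.1 = v1 + 1; omega, by show w'.2 = v2 + 1; omega⟩
      subst hw'
      refine absurd ?_ htype
      ext ⟨p1, p2⟩
      simp only [Set.mem_setOf_eq, dt4, dt3]
    · have hw' : w' = ((v1 - 2, v2) : V2) :=
        Prod.ext_iff.mpr ⟨by show w'.1 = v1 - 2; omega, by show w'.2 = v2; omega⟩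
      subst hw'
      have he : s((((v1, v2)) : V2), ((v1 - 1, v2 + 1) : V2)) ∈ G.edgeSet :=
        (SimpleGraph.mem_edgeSet G).mpr hadj
      have he' : s((((v1, v2)) : V2), ((v1 - 2, v2) : V2)) ∉ G.edgeSet := by
        intro h
        have h9 := (hdeg _).mp ((SimpleGraph.mem_edgeSet G).mp h)
        simp only [Prod.mk.injEq] at h9
        omega
      have hd : ¬ (s((((v1, v2)) : V2), ((v1 - 2, v2) : V2))).IsDiag := by
        simp only [Sym2.mk_isDiag_iff, Prod.mk.injEq]
        omega
      have hne : s((((v1, v2)) : V2), ((v1 - 1, v2 + 1) : V2)) ≠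
          s((((v1, v2)) : V2), ((v1 - 2, v2) : V2)) := by
        simp only [ne_eq, Sym2.eq_iff, Prod.mk.injEq]
        omega
      refine ⟨((v1 - 2, v2) : V2), -1, Or.inr rfl, Or.inr (Or.inr ?_)⟩
      rintro ⟨p1, p2⟩
      rw [ast_replace G _ _ he he' hd hne, dt4, dt2]
      simp only [pat3, Prod.mk.injEq]
      split_ifs <;> omega
end

section
/- A spin of type 1, 3, or 5 (rotating a pendant edge at a pivot vertex from a position in an upward triangle to another position in the same upward triangle, or symmetric variants) leaves the associated alternating sign triangle unchanged. -/
open SimpleGraph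

/-- A spin for which the old and new edges lie in the same downward triangles (a spin
of type 1, 3, or 5) leaves the alternating sign triangle unchanged. -/
theorem spin_type135_ast_eq (n : ℕ) (G G' : SimpleGraph V2) (hG : IsGrove n G)
    (v w w' : V2) (hv : v ∈ interiorVerts n) (hdeg : ∀ u, G.Adj v u ↔ u = w)
    (hrot : w' - v = cw (w - v) ∨ w' - v = ccw (w - v))
    (hG' : G' = replaceEdge G s(v, w) s(v, w'))
    (htype : {p : V2 | s(v, w) ∈ downTriEdges p} = {p : V2 | s(v, w') ∈ downTriEdges p}) :
    ∀ p, ast G' p = ast G p := by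
  have hadj : G.Adj v w := (hdeg w).mpr rfl
  have hvw : v ≠ w := hadj.ne
  have hlat : latticeAdj v w := (hG.supported hadj).2.2
  have hsub : ∀ a b : V2, a - b = (a.1 - b.1, a.2 - b.2) := fun a b => rfl
  have hd : (w.1 - v.1, w.2 - v.2) ∈
      ({(2, 0), (-2, 0), (1, 1), (-1, -1), (1, -1), (-1, 1)} : Set V2) := hlat
  simp only [Set.mem_insert_iff, Set.mem_singleton_iff, Prod.mk.injEq] at hd
  have hne : w' ≠ v ∧ w' ≠ w := by
    rw [hsub, hsub] at hrot
    constructor <;> intro hc <;> subst hc <;>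
      rcases hd with ⟨h1, h2⟩ | ⟨h1, h2⟩ | ⟨h1, h2⟩ | ⟨h1, h2⟩ | ⟨h1, h2⟩ | ⟨h1, h2⟩ <;>
      rw [h1, h2] at hrot <;>
      rcases hrot with hr | hr <;>
      simp only [cw, ccw, Prod.mk.injEq] at hr <;> omega
  obtain ⟨hw'v, hw'w⟩ := hne
  have hE : G'.edgeSet = (G.edgeSet \ {s(v, w)}) ∪ {s(v, w')} := by
    rw [hG', replaceEdge, SimpleGraph.edgeSet_fromEdgeSet]
    ext e
    simp only [Set.mem_diff, Set.mem_union, Set.mem_singleton_iff, Set.mem_setOf_eq,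
      and_iff_left_iff_imp]
    rintro (⟨he, -⟩ | he) hdiag
    · exact (SimpleGraph.not_isDiag_of_mem_edgeSet G he) hdiag
    · subst he
      exact hw'v.symm (Sym2.mk_isDiag_iff.mp hdiag)
  have he0ne1 : s(v, w) ≠ s(v, w') := by
    intro hc
    rw [Sym2.eq_iff] at hc
    rcases hc with ⟨-, h⟩ | ⟨-, h⟩
    · exact hw'w h.symm
    · exact hvw h.symm
  have he1notE : s(v, w') ∉ G.edgeSet := by
    intro hc
    exact hw'w ((hdeg w').mp hc)
  intro p
  have hTfin : (downTriEdges p).Finite := by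
    unfold downTriEdges
    exact ((Set.finite_singleton _).insert _).insert _
  have hiff : s(v, w) ∈ downTriEdges p ↔ s(v, w') ∈ downTriEdges p := by
    have := Set.ext_iff.mp htype p
    simpa using this
  unfold ast
  by_cases hm : s(v, w) ∈ downTriEdges p
  · have hm' : s(v, w') ∈ downTriEdges p := hiff.mp hm
    congr 1
    rw [hE]
    have hkey : ((G.edgeSet \ {s(v, w)}) ∪ {s(v, w')}) ∩ downTriEdges p =
        insert s(v, w') ((G.edgeSet ∩ downTriEdges p) \ {s(v, w)}) := by
      ext e
      simp only [Set.mem_inter_iff, Set.mem_union, Set.mem_diff,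
        Set.mem_singleton_iff, Set.mem_insert_iff]
      constructor
      · rintro ⟨⟨he, hne⟩ | he, hT⟩
        · exact Or.inr ⟨⟨he, hT⟩, hne⟩
        · exact Or.inl he
      · rintro (he | ⟨⟨he, hT⟩, hne⟩)
        · subst he; exact ⟨Or.inr rfl, hm'⟩
        · exact ⟨Or.inl ⟨he, hne⟩, hT⟩
    rw [hkey]
    have hfin : (G.edgeSet ∩ downTriEdges p).Finite := hTfin.inter_of_right _
    have hnotmem : s(v, w') ∉ (G.edgeSet ∩ downTriEdges p) \ {s(v, w)} := by
      rintro ⟨⟨he, -⟩, -⟩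
      exact he1notE he
    rw [Set.ncard_insert_of_notMem hnotmem hfin.diff]
    have hmem : s(v, w) ∈ G.edgeSet ∩ downTriEdges p :=
      ⟨(SimpleGraph.mem_edgeSet G).mpr hadj, hm⟩
    have := Set.ncard_diff_singleton_add_one hmem hfin
    omega
  · have hm' : s(v, w') ∉ downTriEdges p := fun h => hm (hiff.mpr h)
    have hset : G'.edgeSet ∩ downTriEdges p = G.edgeSet ∩ downTriEdges p := by
      rw [hE]
      ext e
      simp only [Set.mem_inter_iff, Set.mem_union, Set.mem_diff, Set.mem_singleton_iff]
      constructor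
      · rintro ⟨⟨he, -⟩ | he, hT⟩
        · exact ⟨he, hT⟩
        · subst he; exact absurd hT hm'
      · rintro ⟨he, hT⟩
        refine ⟨Or.inl ⟨he, ?_⟩, hT⟩
        rintro rfl
        exact hm hT
    rw [hset]
end

section
/- If a simplified grove G of size n differs from the target grove, then its difference grove contains at least one red edge (an edge of G not in the target grove). -/
open SimpleGraph

/-- The edges of the target grove of size `n`: for each east pair (`i = n - 2a`) the
straight path hugging the east boundary; for each west pair (and the middle triplet,
`2a = n`) the `V`-shaped path of `a` down-right steps followed by `a` horizontal steps
back to the west partner; for each south pair the horizontal path along its row. -/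
def targetEdgeSet (n : ℕ) : Set (Sym2 V2) :=
  {e | ∃ a k : ℤ, 0 < a ∧ 2 * a < (n : ℤ) ∧ 0 ≤ k ∧ k < a ∧
      e = s((((n : ℤ) - 2 * a + k, -k) : V2), ((n : ℤ) - 2 * a + k + 1, -(k + 1)))} ∪
  {e | ∃ a k : ℤ, 0 < a ∧ 2 * a ≤ (n : ℤ) ∧ 0 ≤ k ∧ k < a ∧
      e = s(((2 * a - (n : ℤ) + k, -k) : V2), (2 * a - (n : ℤ) + k + 1, -(k + 1)))} ∪
  {e | ∃ a m : ℤ, 0 < a ∧ 2 * a ≤ (n : ℤ) ∧ 0 ≤ m ∧ m < a ∧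
      e = s(((a - (n : ℤ) + 2 * m, -a) : V2), (a - (n : ℤ) + 2 * m + 2, -a))} ∪
  {e | ∃ i m : ℤ, (n : ℤ) < 2 * i ∧ i < (n : ℤ) ∧ 0 ≤ m ∧ m < (n : ℤ) - i ∧
      e = s(((-(n : ℤ) + i + 2 * m, -i) : V2), (-(n : ℤ) + i + 2 * m + 2, -i))}

/-- The target grove of size `n`. -/
def targetGrove (n : ℕ) : SimpleGraph V2 :=
  SimpleGraph.fromEdgeSet (targetEdgeSet n)


section Aux

/-- Cut set for an east diagonal edge: the lower tail of the east path. -/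
def cutE (n : ℕ) (a0 k0 : ℤ) : Set V2 :=
  {p | p.1 + p.2 = (n : ℤ) - 2 * a0 ∧ -a0 ≤ p.2 ∧ p.2 ≤ -(k0 + 1)}

/-- Cut set for a west diagonal edge: the upper head of the west path. -/
def cutW (n : ℕ) (a0 k0 : ℤ) : Set V2 :=
  {p | p.1 + p.2 = 2 * a0 - (n : ℤ) ∧ -k0 ≤ p.2 ∧ p.2 ≤ 0}

/-- Cut set for a west horizontal edge: the left tail of the west path. -/
def cutH (n : ℕ) (a0 m0 : ℤ) : Set V2 :=
  {p | p.2 = -a0 ∧ a0 - (n : ℤ) ≤ p.1 ∧ p.1 ≤ a0 - (n : ℤ) + 2 * m0 ∧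
    (p.1 - a0 + (n : ℤ)) % 2 = 0}

/-- Cut set for a south horizontal edge: the left tail of the south path. -/
def cutS (n : ℕ) (i0 m0 : ℤ) : Set V2 :=
  {p | p.2 = -i0 ∧ -(n : ℤ) + i0 ≤ p.1 ∧ p.1 ≤ -(n : ℤ) + i0 + 2 * m0 ∧
    (p.1 + (n : ℤ) - i0) % 2 = 0}

lemma edge_in_G {n : ℕ} {G : SimpleGraph V2} (hG : IsGrove n G)
    (hsub : ∀ e ∈ G.edgeSet, e ∈ targetEdgeSet n)
    {S : Set V2} {Sb : Set V2} (hSb : Sb ∈ boundarySets n) {u v : V2}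
    (hu : u ∈ Sb) (hv : v ∈ Sb) (huS : u ∈ S) (hvS : v ∉ S) {p0 q0 : V2}
    (hcross : ∀ x y : V2, s(x, y) ∈ targetEdgeSet n → x ∈ S → y ∉ S →
      s(x, y) = s(p0, q0)) :
    G.Adj p0 q0 := by
  obtain ⟨w⟩ := hG.conn_in Sb hSb u hu v hv
  obtain ⟨d, hd, hdS, hdS'⟩ := w.exists_boundary_dart S huS hvS
  have hadj : G.Adj d.fst d.snd := d.adj
  have hmem : s(d.fst, d.snd) ∈ targetEdgeSet n :=
    hsub _ (G.mem_edgeSet.mpr hadj)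
  have heq := hcross _ _ hmem hdS hdS'
  have : s(p0, q0) ∈ G.edgeSet := by
    rw [← heq]; exact G.mem_edgeSet.mpr hadj
  exact G.mem_edgeSet.mp this

lemma mem_target_cases {n : ℕ} {x y : V2} (h : s(x, y) ∈ targetEdgeSet n) :
    (∃ a k : ℤ, 0 < a ∧ 2 * a < (n : ℤ) ∧ 0 ≤ k ∧ k < a ∧
      s(x, y) = s((((n : ℤ) - 2 * a + k, -k) : V2), ((n : ℤ) - 2 * a + k + 1, -(k + 1)))) ∨
    (∃ a k : ℤ, 0 < a ∧ 2 * a ≤ (n : ℤ) ∧ 0 ≤ k ∧ k < a ∧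
      s(x, y) = s(((2 * a - (n : ℤ) + k, -k) : V2), (2 * a - (n : ℤ) + k + 1, -(k + 1)))) ∨
    (∃ a m : ℤ, 0 < a ∧ 2 * a ≤ (n : ℤ) ∧ 0 ≤ m ∧ m < a ∧
      s(x, y) = s(((a - (n : ℤ) + 2 * m, -a) : V2), (a - (n : ℤ) + 2 * m + 2, -a))) ∨
    (∃ i m : ℤ, (n : ℤ) < 2 * i ∧ i < (n : ℤ) ∧ 0 ≤ m ∧ m < (n : ℤ) - i ∧
      s(x, y) = s(((-(n : ℤ) + i + 2 * m, -i) : V2), (-(n : ℤ) + i + 2 * m + 2, -i))) := by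
  simp only [targetEdgeSet, Set.mem_union, Set.mem_setOf_eq] at h
  rcases h with ((h | h) | h) | h
  · exact Or.inl h
  · exact Or.inr (Or.inl h)
  · exact Or.inr (Or.inr (Or.inl h))
  · exact Or.inr (Or.inr (Or.inr h))

lemma crossE {n : ℕ} (a0 k0 : ℤ) (h1 : 0 < a0) (h2 : 2 * a0 < (n : ℤ))
    (h3 : 0 ≤ k0) (h4 : k0 < a0) :
    ∀ x y : V2, s(x, y) ∈ targetEdgeSet n → x ∈ cutE n a0 k0 → y ∉ cutE n a0 k0 →
      s(x, y) = s(((((n : ℤ) - 2 * a0 + k0, -k0)) : V2),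
        ((n : ℤ) - 2 * a0 + k0 + 1, -(k0 + 1))) := by
  rintro ⟨x1, x2⟩ ⟨y1, y2⟩ hmem hx hy
  simp only [cutE, Set.mem_setOf_eq] at hx hy
  rcases mem_target_cases hmem with ⟨a, k, g1, g2, g3, g4, he⟩ | ⟨a, k, g1, g2, g3, g4, he⟩ |
    ⟨a, m, g1, g2, g3, g4, he⟩ | ⟨i, m, g1, g2, g3, g4, he⟩ <;>
  · rw [Sym2.eq_iff] at he ⊢
    simp only [Prod.mk.injEq] at he ⊢
    omega

lemma crossW {n : ℕ} (a0 k0 : ℤ) (h1 : 0 < a0) (h2 : 2 * a0 ≤ (n : ℤ))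
    (h3 : 0 ≤ k0) (h4 : k0 < a0) :
    ∀ x y : V2, s(x, y) ∈ targetEdgeSet n → x ∈ cutW n a0 k0 → y ∉ cutW n a0 k0 →
      s(x, y) = s(((2 * a0 - (n : ℤ) + k0, -k0) : V2),
        (2 * a0 - (n : ℤ) + k0 + 1, -(k0 + 1))) := by
  rintro ⟨x1, x2⟩ ⟨y1, y2⟩ hmem hx hy
  simp only [cutW, Set.mem_setOf_eq] at hx hy
  rcases mem_target_cases hmem with ⟨a, k, g1, g2, g3, g4, he⟩ | ⟨a, k, g1, g2, g3, g4, he⟩ |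
    ⟨a, m, g1, g2, g3, g4, he⟩ | ⟨i, m, g1, g2, g3, g4, he⟩ <;>
  · rw [Sym2.eq_iff] at he ⊢
    simp only [Prod.mk.injEq] at he ⊢
    omega

lemma crossH {n : ℕ} (a0 m0 : ℤ) (h1 : 0 < a0) (h2 : 2 * a0 ≤ (n : ℤ))
    (h3 : 0 ≤ m0) (h4 : m0 < a0) :
    ∀ x y : V2, s(x, y) ∈ targetEdgeSet n → x ∈ cutH n a0 m0 → y ∉ cutH n a0 m0 →
      s(x, y) = s(((a0 - (n : ℤ) + 2 * m0, -a0) : V2),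
        (a0 - (n : ℤ) + 2 * m0 + 2, -a0)) := by
  rintro ⟨x1, x2⟩ ⟨y1, y2⟩ hmem hx hy
  simp only [cutH, Set.mem_setOf_eq] at hx hy
  rcases mem_target_cases hmem with ⟨a, k, g1, g2, g3, g4, he⟩ | ⟨a, k, g1, g2, g3, g4, he⟩ |
    ⟨a, m, g1, g2, g3, g4, he⟩ | ⟨i, m, g1, g2, g3, g4, he⟩ <;>
  · rw [Sym2.eq_iff] at he ⊢
    simp only [Prod.mk.injEq] at he ⊢
    omega

lemma crossS {n : ℕ} (i0 m0 : ℤ) (h1 : (n : ℤ) < 2 * i0) (h2 : i0 < (n : ℤ))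
    (h3 : 0 ≤ m0) (h4 : m0 < (n : ℤ) - i0) :
    ∀ x y : V2, s(x, y) ∈ targetEdgeSet n → x ∈ cutS n i0 m0 → y ∉ cutS n i0 m0 →
      s(x, y) = s(((-(n : ℤ) + i0 + 2 * m0, -i0) : V2),
        (-(n : ℤ) + i0 + 2 * m0 + 2, -i0)) := by
  rintro ⟨x1, x2⟩ ⟨y1, y2⟩ hmem hx hy
  simp only [cutS, Set.mem_setOf_eq] at hx hy
  rcases mem_target_cases hmem with ⟨a, k, g1, g2, g3, g4, he⟩ | ⟨a, k, g1, g2, g3, g4, he⟩ |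
    ⟨a, m, g1, g2, g3, g4, he⟩ | ⟨i, m, g1, g2, g3, g4, he⟩ <;>
  · rw [Sym2.eq_iff] at he ⊢
    simp only [Prod.mk.injEq] at he ⊢
    omega

end Aux

/-- If a simplified grove of size `n` differs from the target grove, then it has at
least one red edge: an edge not belonging to the target grove. -/
theorem exists_red_edge (n : ℕ) (G : SimpleGraph V2) (hG : IsGrove n G)
    (hne : G ≠ targetGrove n) :
    ∃ e ∈ G.edgeSet, e ∉ (targetGrove n).edgeSet := by
  by_contra hred
  push_neg at hred
  have hsub : ∀ e ∈ G.edgeSet, e ∈ targetEdgeSet n := by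
    intro e he
    have := hred e he
    rw [targetGrove, edgeSet_fromEdgeSet] at this
    exact this.1
  apply hne
  ext x y
  constructor
  · intro hxy
    have h1 : s(x, y) ∈ (targetGrove n).edgeSet := hred _ (G.mem_edgeSet.mpr hxy)
    exact (targetGrove n).mem_edgeSet.mp h1
  · intro hxy
    have hmem : s(x, y) ∈ targetEdgeSet n := by
      rw [targetGrove, fromEdgeSet_adj] at hxy
      exact hxy.1
    rcases mem_target_cases hmem with ⟨a, k, g1, g2, g3, g4, he⟩ | ⟨a, k, g1, g2, g3, g4, he⟩ |
      ⟨a, m, g1, g2, g3, g4, he⟩ | ⟨i, m, g1, g2, g3, g4, he⟩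
    · -- east diagonal edge
      have hSb : ({((n : ℤ) - 2 * a, 0), ((n : ℤ) - a, -a)} : Set V2) ∈ boundarySets n := by
        exact Set.mem_union_left _ (Set.mem_union_left _
          (Set.mem_union_right _ ⟨a, g1, g2, rfl⟩))
      have hu : (((n : ℤ) - a, -a) : V2) ∈
          ({((n : ℤ) - 2 * a, 0), ((n : ℤ) - a, -a)} : Set V2) := by simp
      have hv : ((((n : ℤ) - 2 * a, 0)) : V2) ∈
          ({((n : ℤ) - 2 * a, 0), ((n : ℤ) - a, -a)} : Set V2) := by simp
      have huS : (((n : ℤ) - a, -a) : V2) ∈ cutE n a k := by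
        simp only [cutE, Set.mem_setOf_eq, true_and, and_true]; omega
      have hvS : ((((n : ℤ) - 2 * a, 0)) : V2) ∉ cutE n a k := by
        simp only [cutE, Set.mem_setOf_eq, true_and, and_true]; omega
      have hadj := edge_in_G hG hsub hSb hu hv huS hvS (crossE a k g1 g2 g3 g4)
      have : s(x, y) ∈ G.edgeSet := by rw [he]; exact G.mem_edgeSet.mpr hadj
      exact G.mem_edgeSet.mp this
    · -- west diagonal edge
      rcases lt_or_eq_of_le g2 with g2' | g2'
      · have hSb : ({(2 * a - (n : ℤ), 0), (a - (n : ℤ), -a)} : Set V2) ∈ boundarySets n := by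
          exact Set.mem_union_left _ (Set.mem_union_left _ (Set.mem_union_left _
            (Set.mem_union_right _ ⟨a, g1, g2', rfl⟩)))
        have hu : ((2 * a - (n : ℤ), 0) : V2) ∈
            ({(2 * a - (n : ℤ), 0), (a - (n : ℤ), -a)} : Set V2) := by simp
        have hv : ((a - (n : ℤ), -a) : V2) ∈
            ({(2 * a - (n : ℤ), 0), (a - (n : ℤ), -a)} : Set V2) := by simp
        have huS : ((2 * a - (n : ℤ), 0) : V2) ∈ cutW n a k := by
          simp only [cutW, Set.mem_setOf_eq, true_and, and_true]; omega
        have hvS : ((a - (n : ℤ), -a) : V2) ∉ cutW n a k := by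
          simp only [cutW, Set.mem_setOf_eq, true_and, and_true]; omega
        have hadj := edge_in_G hG hsub hSb hu hv huS hvS (crossW a k g1 g2 g3 g4)
        have : s(x, y) ∈ G.edgeSet := by rw [he]; exact G.mem_edgeSet.mpr hadj
        exact G.mem_edgeSet.mp this
      · have hSb : ({(0, 0), (-a, -a), (a, -a)} : Set V2) ∈ boundarySets n := by
          exact Set.mem_union_right _ ⟨a, g1, g2', rfl⟩
        have hu : ((0, 0) : V2) ∈ ({(0, 0), (-a, -a), (a, -a)} : Set V2) := by simp
        have hv : ((-a, -a) : V2) ∈ ({(0, 0), (-a, -a), (a, -a)} : Set V2) := by simp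
        have huS : ((0, 0) : V2) ∈ cutW n a k := by
          simp only [cutW, Set.mem_setOf_eq, true_and, and_true]; omega
        have hvS : ((-a, -a) : V2) ∉ cutW n a k := by
          simp only [cutW, Set.mem_setOf_eq, true_and, and_true]; omega
        have hadj := edge_in_G hG hsub hSb hu hv huS hvS (crossW a k g1 g2 g3 g4)
        have : s(x, y) ∈ G.edgeSet := by rw [he]; exact G.mem_edgeSet.mpr hadj
        exact G.mem_edgeSet.mp this
    · -- west horizontal edge
      rcases lt_or_eq_of_le g2 with g2' | g2'
      · have hSb : ({(2 * a - (n : ℤ), 0), (a - (n : ℤ), -a)} : Set V2) ∈ boundarySets n := by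
          exact Set.mem_union_left _ (Set.mem_union_left _ (Set.mem_union_left _
            (Set.mem_union_right _ ⟨a, g1, g2', rfl⟩)))
        have hu : ((a - (n : ℤ), -a) : V2) ∈
            ({(2 * a - (n : ℤ), 0), (a - (n : ℤ), -a)} : Set V2) := by simp
        have hv : ((2 * a - (n : ℤ), 0) : V2) ∈
            ({(2 * a - (n : ℤ), 0), (a - (n : ℤ), -a)} : Set V2) := by simp
        have huS : ((a - (n : ℤ), -a) : V2) ∈ cutH n a m := by
          simp only [cutH, Set.mem_setOf_eq, true_and, and_true]; omega
        have hvS : ((2 * a - (n : ℤ), 0) : V2) ∉ cutH n a m := by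
          simp only [cutH, Set.mem_setOf_eq, true_and, and_true]; omega
        have hadj := edge_in_G hG hsub hSb hu hv huS hvS (crossH a m g1 g2 g3 g4)
        have : s(x, y) ∈ G.edgeSet := by rw [he]; exact G.mem_edgeSet.mpr hadj
        exact G.mem_edgeSet.mp this
      · have hSb : ({(0, 0), (-a, -a), (a, -a)} : Set V2) ∈ boundarySets n := by
          exact Set.mem_union_right _ ⟨a, g1, g2', rfl⟩
        have hu : ((-a, -a) : V2) ∈ ({(0, 0), (-a, -a), (a, -a)} : Set V2) := by simp
        have hv : ((0, 0) : V2) ∈ ({(0, 0), (-a, -a), (a, -a)} : Set V2) := by simp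
        have huS : ((-a, -a) : V2) ∈ cutH n a m := by
          simp only [cutH, Set.mem_setOf_eq, true_and, and_true]; omega
        have hvS : ((0, 0) : V2) ∉ cutH n a m := by
          simp only [cutH, Set.mem_setOf_eq, true_and, and_true]; omega
        have hadj := edge_in_G hG hsub hSb hu hv huS hvS (crossH a m g1 g2 g3 g4)
        have : s(x, y) ∈ G.edgeSet := by rw [he]; exact G.mem_edgeSet.mpr hadj
        exact G.mem_edgeSet.mp this
    · -- south horizontal edge
      have hSb : ({(-(n : ℤ) + i, -i), ((n : ℤ) - i, -i)} : Set V2) ∈ boundarySets n := by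
        exact Set.mem_union_left _ (Set.mem_union_right _ ⟨i, g1, g2, rfl⟩)
      have hu : ((-(n : ℤ) + i, -i) : V2) ∈
          ({(-(n : ℤ) + i, -i), ((n : ℤ) - i, -i)} : Set V2) := by simp
      have hv : (((n : ℤ) - i, -i) : V2) ∈
          ({(-(n : ℤ) + i, -i), ((n : ℤ) - i, -i)} : Set V2) := by simp
      have huS : ((-(n : ℤ) + i, -i) : V2) ∈ cutS n i m := by
        simp only [cutS, Set.mem_setOf_eq, true_and, and_true]; omega
      have hvS : (((n : ℤ) - i, -i) : V2) ∉ cutS n i m := by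
        simp only [cutS, Set.mem_setOf_eq, true_and, and_true]; omega
      have hadj := edge_in_G hG hsub hSb hu hv huS hvS (crossS i m g1 g2 g3 g4)
      have : s(x, y) ∈ G.edgeSet := by rw [he]; exact G.mem_edgeSet.mpr hadj
      exact G.mem_edgeSet.mp this
end
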